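/- arXiv:1707.03145 — 5 statements merged into one kernel-verified Lean document; each statement's English description precedes it below -/
import Mathlib

section
/- Let F^(L), F^(R) : ℝ² → ℝ² be bilinear maps sharing the interface F^(L)(0,v) = F^(R)(0,v) =: F₀(v) for all v, with F₀′(v) ≠ 0 for all v ∈ [0,1]. Define α^(S)(v) = det[D_u F^(S)(0,v), F₀′(v)] for S ∈ {L,R}, β(v) = det[D_u F^(L)(0,v), D_u F^(R)(0,v)], Z(v) = (α^(L)(v))² D_uu F^(R)(0,v) − ( (α^(R)(v))² D_uu F^(L)(0,v) + 2 α^(R)(v) β(v) D_uv F^(L)(0,v) + β(v)² F₀″(v) ), and η(v) = det[F₀′(v), Z(v)]. Then for all v ∈ [0,1], η(v) = 2 (α^(L))′(v) α^(R)(v) β(v). -/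
open Set

/-- The 2×2 determinant `det[x, y] = x₁ y₂ − x₂ y₁` of two vectors in `ℝ²`. -/
noncomputable def det2 (x y : ℝ × ℝ) : ℝ := x.1 * y.2 - x.2 * y.1

/-- `F : ℝ² → ℝ²` is bilinear: each component has the form `a + b·u + c·v + d·u·v`. -/
def IsBilinear (F : ℝ → ℝ → ℝ × ℝ) : Prop :=
  ∃ a b c d : ℝ × ℝ, ∀ u v : ℝ, F u v = a + u • b + v • c + (u * v) • d

/-- `D_u F(0,v)`. -/
noncomputable def DuF (F : ℝ → ℝ → ℝ × ℝ) (v : ℝ) : ℝ × ℝ := deriv (fun u => F u v) 0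

/-- `D_uu F(0,v)`. -/
noncomputable def DuuF (F : ℝ → ℝ → ℝ × ℝ) (v : ℝ) : ℝ × ℝ :=
  deriv (deriv (fun u => F u v)) 0

/-- `D_uv F(0,v)`. -/
noncomputable def DuvF (F : ℝ → ℝ → ℝ × ℝ) (v : ℝ) : ℝ × ℝ := deriv (fun w => DuF F w) v

/-- `F₀′(v)`, the derivative of the interface curve `v ↦ F(0,v)`. -/
noncomputable def F0d (F : ℝ → ℝ → ℝ × ℝ) (v : ℝ) : ℝ × ℝ := deriv (fun w => F 0 w) v

/-- `F₀″(v)`, the second derivative of the interface curve `v ↦ F(0,v)`. -/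
noncomputable def F0dd (F : ℝ → ℝ → ℝ × ℝ) (v : ℝ) : ℝ × ℝ :=
  deriv (deriv (fun w => F 0 w)) v

/-- `α^(S)(v) = det[D_u F^(S)(0,v), F₀′(v)]`, where `G` carries the interface `F₀`. -/
noncomputable def alphaF (F G : ℝ → ℝ → ℝ × ℝ) (v : ℝ) : ℝ := det2 (DuF F v) (F0d G v)

/-- `β(v) = det[D_u F^(L)(0,v), D_u F^(R)(0,v)]`. -/
noncomputable def betaBar (FL FR : ℝ → ℝ → ℝ × ℝ) (v : ℝ) : ℝ :=
  det2 (DuF FL v) (DuF FR v)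

/-- `Z(v) = (α^(L)(v))² D_uu F^(R)(0,v) − ((α^(R)(v))² D_uu F^(L)(0,v)
      + 2 α^(R)(v) β(v) D_uv F^(L)(0,v) + β(v)² F₀″(v))`. -/
noncomputable def Zfun (FL FR : ℝ → ℝ → ℝ × ℝ) (v : ℝ) : ℝ × ℝ :=
  (alphaF FL FL v) ^ 2 • DuuF FR v -
    ((alphaF FR FL v) ^ 2 • DuuF FL v + (2 * alphaF FR FL v * betaBar FL FR v) • DuvF FL v +
      (betaBar FL FR v) ^ 2 • F0dd FL v)

lemma hasDerivAt_affine (k m : ℝ × ℝ) (x : ℝ) :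
    HasDerivAt (fun u : ℝ => k + u • m) m x := by
  simpa using ((hasDerivAt_id x).smul_const m).const_add k

lemma deriv_affine (k m : ℝ × ℝ) (x : ℝ) :
    deriv (fun u : ℝ => k + u • m) x = m := (hasDerivAt_affine k m x).deriv

section bil
variable {F : ℝ → ℝ → ℝ × ℝ} {a b c d : ℝ × ℝ}
  (hF : ∀ u v : ℝ, F u v = a + u • b + v • c + (u * v) • d)

include hF

lemma slice_eq (v : ℝ) :
    (fun u => F u v) = fun u : ℝ => (a + v • c) + u • (b + v • d) := by
  funext u
  rw [hF, smul_add, smul_smul]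
  abel

lemma DuF_eq (v : ℝ) : DuF F v = b + v • d := by
  unfold DuF; rw [slice_eq hF, deriv_affine]

lemma DuuF_eq (v : ℝ) : DuuF F v = 0 := by
  unfold DuuF
  rw [slice_eq hF]
  have h : deriv (fun u : ℝ => (a + v • c) + u • (b + v • d)) = fun _ => b + v • d :=
    funext (deriv_affine _ _)
  rw [h, deriv_const]

lemma interface_eq : (fun w => F 0 w) = fun w : ℝ => a + w • c := by
  funext w; rw [hF]; simp

lemma F0d_eq (v : ℝ) : F0d F v = c := by
  unfold F0d; rw [interface_eq hF, deriv_affine]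

lemma F0dd_eq (v : ℝ) : F0dd F v = 0 := by
  unfold F0dd
  rw [interface_eq hF]
  have h : deriv (fun w : ℝ => a + w • c) = fun _ => c := funext (deriv_affine _ _)
  rw [h, deriv_const]

lemma DuvF_eq (v : ℝ) : DuvF F v = d := by
  unfold DuvF
  have h : (fun w => DuF F w) = fun w : ℝ => b + w • d := funext fun w => DuF_eq hF w
  rw [h, deriv_affine]

lemma deriv_alpha (v : ℝ) :
    deriv (fun w => alphaF F F w) v = det2 d c := by
  have h : (fun w => alphaF F F w) = fun w : ℝ => det2 b c + w * det2 d c := by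
    funext w
    rw [alphaF, DuF_eq hF, F0d_eq hF]
    simp [det2]
    ring
  rw [h]
  simpa using (((hasDerivAt_id v).mul_const (det2 d c)).const_add (det2 b c)).deriv

end bil

theorem stmt1 (FL FR : ℝ → ℝ → ℝ × ℝ)
    (hFL : IsBilinear FL) (hFR : IsBilinear FR)
    (hInterface : ∀ v : ℝ, FL 0 v = FR 0 v)
    (hreg : ∀ v ∈ Icc (0:ℝ) 1, F0d FL v ≠ 0) :
    ∀ v ∈ Icc (0:ℝ) 1,
      det2 (F0d FL v) (Zfun FL FR v) =
        2 * deriv (fun w => alphaF FL FL w) v * alphaF FR FL v * betaBar FL FR v := by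
  obtain ⟨aL, bL, cL, dL, hL⟩ := hFL
  obtain ⟨aR, bR, cR, dR, hR⟩ := hFR
  intro v hv
  rw [Zfun, alphaF, alphaF, betaBar, DuuF_eq hL v, DuuF_eq hR v, F0dd_eq hL v,
    DuvF_eq hL v, DuF_eq hL v, DuF_eq hR v, F0d_eq hL v, deriv_alpha hL v]
  simp [det2]
  ring
end

section
/- Let F^(L), F^(R) : ℝ² → ℝ² be bilinear maps sharing the interface F^(L)(0,v) = F^(R)(0,v) =: F₀(v) for all v, with F₀′(v) ≠ 0 for all v ∈ [0,1]. Define α^(S)(v) = det[D_u F^(S)(0,v), F₀′(v)] and β^(S)(v) = (D_u F^(S)(0,v) · F₀′(v)) / ‖F₀′(v)‖² for S ∈ {L,R}, β(v) = det[D_u F^(L)(0,v), D_u F^(R)(0,v)], Z(v) = (α^(L)(v))² D_uu F^(R)(0,v) − ( (α^(R)(v))² D_uu F^(L)(0,v) + 2 α^(R)(v) β(v) D_uv F^(L)(0,v) + β(v)² F₀″(v) ), and θ(v) = det[Z(v), D_u F^(L)(0,v)]. Then for all v ∈ [0,1], θ(v) = 2 ( α^(L)(v) (β^(L))′(v) −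 (α^(L))′(v) β^(L)(v) ) α^(R)(v) β(v). -/
open Set

/-- The Euclidean dot product of two vectors in `ℝ²`. -/
noncomputable def dot2 (x y : ℝ × ℝ) : ℝ := x.1 * y.1 + x.2 * y.2

/-- `β^(S)(v) = (D_u F^(S)(0,v) · F₀′(v)) / ‖F₀′(v)‖²`. -/
noncomputable def betaF (F G : ℝ → ℝ → ℝ × ℝ) (v : ℝ) : ℝ :=
  dot2 (DuF F v) (F0d G v) / dot2 (F0d G v) (F0d G v)

lemma deriv_affine_smul (p q : ℝ × ℝ) (t : ℝ) :
    deriv (fun s : ℝ => p + s • q) t = q := by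
  have h : HasDerivAt (fun s : ℝ => p + s • q) ((1:ℝ) • q) t :=
    ((hasDerivAt_id t).smul_const q).const_add p
  simpa using h.deriv

lemma deriv_affine_mul (A B : ℝ) (t : ℝ) :
    deriv (fun s : ℝ => A + s * B) t = B := by
  have h : HasDerivAt (fun s : ℝ => A + s * B) (1 * B) t :=
    ((hasDerivAt_id t).mul_const B).const_add A
  simpa using h.deriv

theorem stmt2 (FL FR : ℝ → ℝ → ℝ × ℝ)
    (hFL : IsBilinear FL) (hFR : IsBilinear FR)
    (hInterface : ∀ v : ℝ, FL 0 v = FR 0 v)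
    (hreg : ∀ v ∈ Icc (0:ℝ) 1, F0d FL v ≠ 0) :
    ∀ v ∈ Icc (0:ℝ) 1,
      det2 (Zfun FL FR v) (DuF FL v) =
        2 * (alphaF FL FL v * deriv (fun w => betaF FL FL w) v -
              deriv (fun w => alphaF FL FL w) v * betaF FL FL v) *
          alphaF FR FL v * betaBar FL FR v := by
  obtain ⟨a, b, c, d, hL⟩ := hFL
  obtain ⟨a', b', c', d', hR⟩ := hFR
  -- D_u F^L(0,w) = b + w • d
  have hDuL : ∀ w : ℝ, DuF FL w = b + w • d := by
    intro w
    have hfun : (fun u => FL u w) = fun u : ℝ => (a + w • c) + u • (b + w • d) := by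
      funext u; rw [hL]; module
    rw [DuF, hfun, deriv_affine_smul]
  have hDuR : ∀ w : ℝ, DuF FR w = b' + w • d' := by
    intro w
    have hfun : (fun u => FR u w) = fun u : ℝ => (a' + w • c') + u • (b' + w • d') := by
      funext u; rw [hR]; module
    rw [DuF, hfun, deriv_affine_smul]
  -- F0d FL w = c
  have hF0L : ∀ w : ℝ, F0d FL w = c := by
    intro w
    have hfun : (fun w' => FL 0 w') = fun w' : ℝ => a + w' • c := by
      funext w'; rw [hL]; module
    rw [F0d, hfun, deriv_affine_smul]
  intro v hv
  -- second derivatives vanish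
  have hDuuR : DuuF FR v = 0 := by
    have hfun : deriv (fun u => FR u v) = fun _ : ℝ => b' + v • d' := by
      funext u
      have h2 : (fun u => FR u v) = fun u : ℝ => (a' + v • c') + u • (b' + v • d') := by
        funext u'; rw [hR]; module
      rw [h2, deriv_affine_smul]
    rw [DuuF, hfun, deriv_const]
  have hDuuL : DuuF FL v = 0 := by
    have hfun : deriv (fun u => FL u v) = fun _ : ℝ => b + v • d := by
      funext u
      have h2 : (fun u => FL u v) = fun u : ℝ => (a + v • c) + u • (b + v • d) := by
        funext u'; rw [hL]; module
      rw [h2, deriv_affine_smul]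
    rw [DuuF, hfun, deriv_const]
  have hF0dd : F0dd FL v = 0 := by
    have hfun : deriv (fun w => FL 0 w) = fun _ : ℝ => c := by
      funext w
      have h2 : (fun w' => FL 0 w') = fun w' : ℝ => a + w' • c := by
        funext w'; rw [hL]; module
      rw [h2, deriv_affine_smul]
    rw [F0dd, hfun, deriv_const]
  have hDuv : DuvF FL v = d := by
    have hfun : (fun w => DuF FL w) = fun w : ℝ => b + w • d := by
      funext w; exact hDuL w
    rw [DuvF, hfun, deriv_affine_smul]
  -- derivative of alphaF FL FL
  have hAlpha : ∀ w : ℝ, alphaF FL FL w =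
      (b.1 * c.2 - b.2 * c.1) + w * (d.1 * c.2 - d.2 * c.1) := by
    intro w
    simp only [alphaF, det2, hDuL w, hF0L w, Prod.fst_add, Prod.snd_add, Prod.smul_fst,
      Prod.smul_snd, smul_eq_mul]
    ring
  have hAlphaDeriv : deriv (fun w => alphaF FL FL w) v = d.1 * c.2 - d.2 * c.1 := by
    have hfun : (fun w => alphaF FL FL w) =
        fun w : ℝ => (b.1 * c.2 - b.2 * c.1) + w * (d.1 * c.2 - d.2 * c.1) := by
      funext w; exact hAlpha w
    rw [hfun, deriv_affine_mul]
  -- derivative of betaF FL FL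
  set K : ℝ := c.1 * c.1 + c.2 * c.2 with hK
  have hBeta : ∀ w : ℝ, betaF FL FL w =
      (b.1 * c.1 + b.2 * c.2) / K + w * ((d.1 * c.1 + d.2 * c.2) / K) := by
    intro w
    simp only [betaF, dot2, hDuL w, hF0L w, Prod.fst_add, Prod.snd_add, Prod.smul_fst,
      Prod.smul_snd, smul_eq_mul, ← hK]
    rw [show (b.1 + w * d.1) * c.1 + (b.2 + w * d.2) * c.2 =
      (b.1 * c.1 + b.2 * c.2) + w * (d.1 * c.1 + d.2 * c.2) by ring, add_div, mul_div_assoc]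
  have hBetaDeriv : deriv (fun w => betaF FL FL w) v = (d.1 * c.1 + d.2 * c.2) / K := by
    have hfun : (fun w => betaF FL FL w) =
        fun w : ℝ => (b.1 * c.1 + b.2 * c.2) / K + w * ((d.1 * c.1 + d.2 * c.2) / K) := by
      funext w; exact hBeta w
    rw [hfun, deriv_affine_mul]
  -- K ≠ 0
  have hc : c ≠ 0 := by
    have := hreg v hv
    rwa [hF0L v] at this
  have hKne : K ≠ 0 := by
    intro h
    apply hc
    have h1 : c.1 = 0 := by nlinarith [sq_nonneg c.1, sq_nonneg c.2]
    have h2 : c.2 = 0 := by nlinarith [sq_nonneg c.1, sq_nonneg c.2]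
    exact Prod.ext h1 h2
  -- now compute everything
  rw [hAlphaDeriv, hBetaDeriv]
  simp only [Zfun, hDuuR, hDuuL, hF0dd, hDuv, alphaF, betaF, betaBar, det2, dot2,
    hDuL, hDuR, hF0L, Prod.fst_add, Prod.snd_add, Prod.fst_sub, Prod.snd_sub,
    Prod.smul_fst, Prod.smul_snd, smul_eq_mul, smul_zero, Prod.fst_zero, Prod.snd_zero,
    zero_sub, add_zero, zero_add, mul_zero, Prod.fst_neg, Prod.snd_neg, ← hK]
  field_simp
  ring
end

section
/- Let α^(L), α^(R), β^(L), β^(R) : ℝ → ℝ be polynomial functions of degree at most 1 with α^(S)(v) ≠ 0 for all v ∈ [0,1] and S ∈ {L,R}, and set β = α^(L)β^(R) − α^(R)β^(L), η = 2(α^(L))′α^(R)β, and θ = 2(α^(L)(β^(L))′ − (α^(L))′β^(L))α^(R)β. Let g^(L), g^(R) : [0,1]² → ℝ be twice continuously differentiable. Then the following two sets of conditions are equivalent. (i) For all v ∈ [0,1]: g^(L)(0,v) = g^(R)(0,v); α^(R)(v)·D_u g^(L)(0,v) − α^(L)(v)·D_u g^(R)(0,v) + β(v)·D_v g^(L)(0,v)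 = 0; and α^(L)(v)·w(v) + η(v)·D_u g^(L)(0,v) + θ(v)·D_v g^(L)(0,v) = 0, where w(v) = (α^(L)(v))² D_uu g^(R)(0,v) − ( (α^(R)(v))² D_uu g^(L)(0,v) + 2α^(R)(v)β(v) D_uv g^(L)(0,v) + β(v)² D_vv g^(L)(0,v) ). (ii) For all v ∈ [0,1]: g^(L)(0,v) = g^(R)(0,v) (call the common value g₀(v)); ( D_u g^(L)(0,v) − β^(L)(v) g₀′(v) ) / α^(L)(v) = ( D_u g^(R)(0,v) − β^(R)(v) g₀′(v) ) / α^(R)(v) (call the common value g₁(v)); and ( D_uu g^(L)(0,v) − (β^(L)(v))² g₀″(v) − 2α^(L)(v)β^(L)(v) g₁′(v) ) / (α^(L)(v))² = ( D_uu g^(R)(0,v) − (β^(R)(v))² g₀″(v) − 2α^(R)(v)β^(R)(v) g₁′(v) ) / (α^(R)(v))². -/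
open Set

/-- `D_u g(0,v)`: one-sided partial derivative w.r.t. the first variable at `(0,v)`,
taken within `[0,1]`. -/
noncomputable def DuW (g : ℝ → ℝ → ℝ) (v : ℝ) : ℝ :=
  derivWithin (fun u => g u v) (Set.Icc 0 1) 0

/-- `D_v g(0,v)`. -/
noncomputable def DvW (g : ℝ → ℝ → ℝ) (v : ℝ) : ℝ :=
  derivWithin (fun w => g 0 w) (Set.Icc 0 1) v

/-- `D_uu g(0,v)`. -/
noncomputable def DuuW (g : ℝ → ℝ → ℝ) (v : ℝ) : ℝ :=
  derivWithin (fun u => derivWithin (fun t => g t v) (Set.Icc 0 1) u) (Set.Icc 0 1) 0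

/-- `D_uv g(0,v)`. -/
noncomputable def DuvW (g : ℝ → ℝ → ℝ) (v : ℝ) : ℝ :=
  derivWithin (fun w => derivWithin (fun t => g t w) (Set.Icc 0 1) 0) (Set.Icc 0 1) v

/-- `D_vv g(0,v)`. -/
noncomputable def DvvW (g : ℝ → ℝ → ℝ) (v : ℝ) : ℝ :=
  derivWithin (derivWithin (fun w => g 0 w) (Set.Icc 0 1)) (Set.Icc 0 1) v

/-- The trace `g₀(v) = g^(L)(0,v)`. -/
noncomputable def gTrace (g : ℝ → ℝ → ℝ) : ℝ → ℝ := fun v => g 0 v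

/-- The function `g₁(v) = (D_u g^(L)(0,v) − β^(L)(v) g₀′(v)) / α^(L)(v)`. -/
noncomputable def gOne (g : ℝ → ℝ → ℝ) (αL βL : ℝ → ℝ) : ℝ → ℝ := fun v =>
  (DuW g v - βL v * derivWithin (gTrace g) (Set.Icc 0 1) v) / αL v

theorem stmt3 (αL αR βL βR : ℝ → ℝ)
    (hαL : ∃ a b : ℝ, ∀ v, αL v = a + b * v)
    (hαR : ∃ a b : ℝ, ∀ v, αR v = a + b * v)
    (hβL : ∃ a b : ℝ, ∀ v, βL v = a + b * v)
    (hβR : ∃ a b : ℝ, ∀ v, βR v = a + b * v)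
    (hαLne : ∀ v ∈ Icc (0:ℝ) 1, αL v ≠ 0)
    (hαRne : ∀ v ∈ Icc (0:ℝ) 1, αR v ≠ 0)
    (gL gR : ℝ → ℝ → ℝ)
    (hgL : ContDiffOn ℝ 2 (fun q : ℝ × ℝ => gL q.1 q.2) (Icc 0 1 ×ˢ Icc 0 1))
    (hgR : ContDiffOn ℝ 2 (fun q : ℝ × ℝ => gR q.1 q.2) (Icc 0 1 ×ˢ Icc 0 1)) :
    -- (i)
    (∀ v ∈ Icc (0:ℝ) 1,
      gL 0 v = gR 0 v ∧
      αR v * DuW gL v - αL v * DuW gR v + (αL v * βR v - αR v * βL v) * DvW gL v = 0 ∧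
      αL v * ((αL v) ^ 2 * DuuW gR v -
          ((αR v) ^ 2 * DuuW gL v +
            2 * αR v * (αL v * βR v - αR v * βL v) * DuvW gL v +
            (αL v * βR v - αR v * βL v) ^ 2 * DvvW gL v)) +
        (2 * deriv αL v * αR v * (αL v * βR v - αR v * βL v)) * DuW gL v +
        (2 * (αL v * deriv βL v - deriv αL v * βL v) * αR v *
          (αL v * βR v - αR v * βL v)) * DvW gL v = 0)
    ↔
    -- (ii)
    (∀ v ∈ Icc (0:ℝ) 1,
      gL 0 v = gR 0 v ∧
      (DuW gL v - βL v * derivWithin (gTrace gL) (Set.Icc 0 1) v) / αL v =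
        (DuW gR v - βR v * derivWithin (gTrace gL) (Set.Icc 0 1) v) / αR v ∧
      (DuuW gL v -
          (βL v) ^ 2 * derivWithin (derivWithin (gTrace gL) (Set.Icc 0 1)) (Set.Icc 0 1) v -
          2 * αL v * βL v * derivWithin (gOne gL αL βL) (Set.Icc 0 1) v) / (αL v) ^ 2 =
        (DuuW gR v -
          (βR v) ^ 2 * derivWithin (derivWithin (gTrace gL) (Set.Icc 0 1)) (Set.Icc 0 1) v -
          2 * αR v * βR v * derivWithin (gOne gL αL βL) (Set.Icc 0 1) v) / (αR v) ^ 2) := by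
  -- affine functions have derivatives everywhere
  have haffine : ∀ (f : ℝ → ℝ), (∃ a b : ℝ, ∀ v, f v = a + b * v) →
      ∀ v : ℝ, HasDerivAt f (deriv f v) v := by
    rintro f ⟨a, b, hf⟩ v
    have hf' : f = fun v => a + b * v := funext hf
    have h : HasDerivAt f b v := by
      rw [hf']
      simpa using ((hasDerivAt_id v).const_mul b).const_add a
    rw [h.deriv]; exact h
  have hαL' := haffine αL hαL
  have hβL' := haffine βL hβL
  have hUD : UniqueDiffOn ℝ (Icc (0:ℝ) 1) := uniqueDiffOn_Icc one_pos
  have h0mem : (0:ℝ) ∈ Icc (0:ℝ) 1 := ⟨le_refl 0, zero_le_one⟩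
  have hUD2 : UniqueDiffOn ℝ (Icc (0:ℝ) 1 ×ˢ Icc (0:ℝ) 1) := hUD.prod hUD
  -- value of DuW gL via fderivWithin of the two-variable function
  have hval : ∀ v ∈ Icc (0:ℝ) 1, DuW gL v =
      fderivWithin ℝ (fun q : ℝ × ℝ => gL q.1 q.2) (Icc 0 1 ×ˢ Icc 0 1) (0, v) (1, 0) := by
    intro v hv
    have hmem : ((0:ℝ), v) ∈ Icc (0:ℝ) 1 ×ˢ Icc (0:ℝ) 1 := ⟨h0mem, hv⟩
    have hFd : HasFDerivWithinAt (fun q : ℝ × ℝ => gL q.1 q.2)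
        (fderivWithin ℝ (fun q : ℝ × ℝ => gL q.1 q.2) (Icc 0 1 ×ˢ Icc 0 1) (0, v))
        (Icc 0 1 ×ˢ Icc 0 1) (0, v) :=
      ((hgL.differentiableOn (by norm_num)) _ hmem).hasFDerivWithinAt
    have hι : HasDerivWithinAt (fun u : ℝ => (u, v)) ((1:ℝ), (0:ℝ)) (Icc 0 1) 0 :=
      ((hasDerivAt_id (0:ℝ)).prodMk (hasDerivAt_const (0:ℝ) v)).hasDerivWithinAt
    have hmaps : MapsTo (fun u : ℝ => (u, v)) (Icc 0 1) (Icc (0:ℝ) 1 ×ˢ Icc (0:ℝ) 1) :=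
      fun u hu => ⟨hu, hv⟩
    have hcomp := hFd.comp_hasDerivWithinAt (0:ℝ) hι hmaps
    exact hcomp.derivWithin (hUD 0 h0mem)
  -- DuW gL is differentiable on [0,1]
  have hDuWdiff : ∀ v ∈ Icc (0:ℝ) 1, DifferentiableWithinAt ℝ (DuW gL) (Icc 0 1) v := by
    intro v hv
    have hfd : ContDiffOn ℝ 1 (fderivWithin ℝ (fun q : ℝ × ℝ => gL q.1 q.2)
        (Icc 0 1 ×ˢ Icc 0 1)) (Icc 0 1 ×ˢ Icc 0 1) := hgL.fderivWithin hUD2 (by norm_num)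
    have hinner : DifferentiableWithinAt ℝ (fun w : ℝ => ((0:ℝ), w)) (Icc (0:ℝ) 1) v :=
      (((differentiable_const (0:ℝ)).prodMk differentiable_id) v).differentiableWithinAt
    have hΦ : DifferentiableWithinAt ℝ
        (fun w : ℝ => fderivWithin ℝ (fun q : ℝ × ℝ => gL q.1 q.2)
          (Icc 0 1 ×ˢ Icc 0 1) (0, w)) (Icc 0 1) v :=
      ((hfd.differentiableOn one_ne_zero) (0, v) ⟨h0mem, hv⟩).comp v hinner (fun w hw => ⟨h0mem, hw⟩)
    have hΦ2 : DifferentiableWithinAt ℝ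
        (fun w : ℝ => fderivWithin ℝ (fun q : ℝ × ℝ => gL q.1 q.2)
          (Icc 0 1 ×ˢ Icc 0 1) (0, w) (1, 0)) (Icc 0 1) v :=
      hΦ.clm_apply (differentiableWithinAt_const _)
    exact hΦ2.congr (fun w hw => hval w hw) (hval v hv)
  -- the trace is C²
  have hTrace : ContDiffOn ℝ 2 (gTrace gL) (Icc (0:ℝ) 1) := by
    have h : ContDiffOn ℝ 2 ((fun q : ℝ × ℝ => gL q.1 q.2) ∘ fun w : ℝ => ((0:ℝ), w))
        (Icc 0 1) :=
      hgL.comp ((contDiff_const.prodMk contDiff_id).contDiffOn) (fun w hw => ⟨h0mem, hw⟩)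
    exact h
  have hT1 : ContDiffOn ℝ 1 (derivWithin (gTrace gL) (Icc 0 1)) (Icc (0:ℝ) 1) :=
    hTrace.derivWithin hUD (by norm_num)
  -- key derivative formula for gOne
  have hFg : ∀ v ∈ Icc (0:ℝ) 1,
      (αL v) ^ 2 * derivWithin (gOne gL αL βL) (Icc 0 1) v =
        (DuvW gL v - (deriv βL v * DvW gL v + βL v * DvvW gL v)) * αL v -
          (DuW gL v - βL v * DvW gL v) * deriv αL v := by
    intro v hv
    have h1 : HasDerivWithinAt (DuW gL) (DuvW gL v) (Icc 0 1) v := by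
      have h := (hDuWdiff v hv).hasDerivWithinAt
      have hrfl : derivWithin (DuW gL) (Icc 0 1) v = DuvW gL v := rfl
      rwa [hrfl] at h
    have h2 : HasDerivWithinAt βL (deriv βL v) (Icc 0 1) v := (hβL' v).hasDerivWithinAt
    have h3 : HasDerivWithinAt (derivWithin (gTrace gL) (Icc 0 1)) (DvvW gL v) (Icc 0 1) v := by
      have h := ((hT1.differentiableOn one_ne_zero) v hv).hasDerivWithinAt
      have hrfl : derivWithin (derivWithin (gTrace gL) (Icc 0 1)) (Icc 0 1) v = DvvW gL v := rfl
      rwa [hrfl] at h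
    have h4 : HasDerivWithinAt αL (deriv αL v) (Icc 0 1) v := (hαL' v).hasDerivWithinAt
    have hdiv := (h1.sub (h2.mul h3)).div h4 (hαLne v hv)
    have hres : derivWithin (gOne gL αL βL) (Icc 0 1) v =
        ((DuvW gL v - (deriv βL v * derivWithin (gTrace gL) (Icc 0 1) v + βL v * DvvW gL v)) *
            αL v -
          (DuW gL v - βL v * derivWithin (gTrace gL) (Icc 0 1) v) * deriv αL v) / (αL v) ^ 2 :=
      hdiv.derivWithin (hUD v hv)
    have hDvrfl : derivWithin (gTrace gL) (Icc (0:ℝ) 1) v = DvW gL v := rfl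
    rw [hres, hDvrfl]
    have hA := hαLne v hv
    field_simp
  -- now the pointwise equivalence
  constructor
  · intro h v hv
    obtain ⟨h1, h2, h3⟩ := h v hv
    have hA := hαLne v hv
    have hB := hαRne v hv
    have hFgv := hFg v hv
    have hDvrfl : derivWithin (gTrace gL) (Icc (0:ℝ) 1) v = DvW gL v := rfl
    have hDvvrfl : derivWithin (derivWithin (gTrace gL) (Icc (0:ℝ) 1)) (Icc (0:ℝ) 1) v =
        DvvW gL v := rfl
    refine ⟨h1, ?_, ?_⟩
    · rw [hDvrfl, div_eq_div_iff hA hB]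
      linear_combination h2
    · rw [hDvvrfl, div_eq_div_iff (pow_ne_zero 2 hA) (pow_ne_zero 2 hB)]
      have key : ∀ X Y : ℝ, αL v * X = αL v * Y → X = Y := fun X Y h => mul_left_cancel₀ hA h
      apply key
      linear_combination -h3 + 2 * αR v * (αL v * βR v - αR v * βL v) * hFgv
  · intro h v hv
    obtain ⟨h1, h2, h3⟩ := h v hv
    have hA := hαLne v hv
    have hB := hαRne v hv
    have hFgv := hFg v hv
    have hDvrfl : derivWithin (gTrace gL) (Icc (0:ℝ) 1) v = DvW gL v := rfl
    have hDvvrfl : derivWithin (derivWithin (gTrace gL) (Icc (0:ℝ) 1)) (Icc (0:ℝ) 1) v =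
        DvvW gL v := rfl
    rw [hDvrfl, div_eq_div_iff hA hB] at h2
    rw [hDvvrfl, div_eq_div_iff (pow_ne_zero 2 hA) (pow_ne_zero 2 hB)] at h3
    refine ⟨h1, ?_, ?_⟩
    · linear_combination h2
    · linear_combination -αL v * h3 + 2 * αR v * (αL v * βR v - αR v * βL v) * hFgv
end

section
/- Let p ≥ 5 and 2 ≤ r ≤ p−3 be integers, k ∈ ℕ₀, and 0 = τ₀ < τ₁ < ⋯ < τ_k < τ_{k+1} = 1. Let α̃^(L), α̃^(R) be coprime real polynomial functions of degree at most 1, each nonvanishing on [0,1], and let d_α̃ = max(deg α̃^(L), deg α̃^(R)). Then the set Γ₂ = { g : [0,1] → ℝ | (α̃^(L))²·g ∈ S(p,r) and (α̃^(R))²·g ∈ S(p,r) } equals the spline space S(p − 2d_α̃, r), and its dimension is k(p − 2d_α̃ − r) + p + 1 − 2d_α̃. -/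
open Set Polynomial

noncomputable section

/-- `f : ℝ → ℝ` restricted to `[0,1]` is a spline of degree at most `d` for the knots
`0 = τ 0 < τ 1 < ⋯ < τ k < τ (k+1) = 1`, with smoothness of order `s i` at the interior
knot `τ i` (`1 ≤ i ≤ k`): on each knot interval `f` coincides with a polynomial of degree
at most `d`, and the one-sided derivatives of orders `0, …, s i` (computed from the
polynomial pieces) agree at each interior knot `τ i`. -/
def IsSplineOn (k : ℕ) (τ : ℕ → ℝ) (d : ℕ) (s : ℕ → ℕ) (f : ℝ → ℝ) : Prop :=
  ∃ P : ℕ → Polynomial ℝ,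
    (∀ i ≤ k, (P i).natDegree ≤ d) ∧
    (∀ i ≤ k, ∀ x ∈ Set.Icc (τ i) (τ (i+1)), f x = (P i).eval x) ∧
    (∀ i, 1 ≤ i → i ≤ k → ∀ j ≤ s i,
      ((fun Q : Polynomial ℝ => Polynomial.derivative Q)^[j] (P (i-1))).eval (τ i) =
        ((fun Q : Polynomial ℝ => Polynomial.derivative Q)^[j] (P i)).eval (τ i))

/-- The spline space `S(d, s)` on `[0,1]`, as a set of functions `[0,1] → ℝ`:
restrictions to `[0,1]` of the functions described by `IsSplineOn`. -/
def SplineSpace (k : ℕ) (τ : ℕ → ℝ) (d : ℕ) (s : ℕ → ℕ) :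
    Set (Set.Icc (0:ℝ) 1 → ℝ) :=
  {g | ∃ f : ℝ → ℝ, IsSplineOn k τ d s f ∧ ∀ x : Set.Icc (0:ℝ) 1, g x = f x.1}


section Tau
variable {k : ℕ} {τ : ℕ → ℝ}

lemma tau_le (hτ : ∀ i ≤ k, τ i < τ (i+1)) :
    ∀ j, j ≤ k+1 → ∀ i, i ≤ j → τ i ≤ τ j := by
  intro j
  induction j with
  | zero => intro _ i hi; interval_cases i; rfl
  | succ n ih =>
    intro hj i hi
    rcases Nat.eq_or_lt_of_le hi with h | h
    · exact h ▸ le_refl _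
    · exact le_trans (ih (by omega) i (by omega)) (hτ n (by omega)).le

lemma tau_lt (hτ : ∀ i ≤ k, τ i < τ (i+1)) {i j : ℕ} (hij : i < j) (hj : j ≤ k+1) :
    τ i < τ j := by
  have h1 : τ i ≤ τ (j-1) := tau_le hτ (j-1) (by omega) i (by omega)
  have h2 : τ (j-1) < τ j := by
    have := hτ (j-1) (by omega)
    rwa [Nat.sub_add_cancel (by omega)] at this
  exact lt_of_le_of_lt h1 h2

lemma piece_subset (hτ0 : τ 0 = 0) (hτ1 : τ (k+1) = 1) (hτ : ∀ i ≤ k, τ i < τ (i+1))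
    {i : ℕ} (hi : i ≤ k) : Icc (τ i) (τ (i+1)) ⊆ Icc (0:ℝ) 1 := by
  intro x hx
  constructor
  · calc (0:ℝ) = τ 0 := hτ0.symm
      _ ≤ τ i := tau_le hτ i (by omega) 0 (by omega)
      _ ≤ x := hx.1
  · calc x ≤ τ (i+1) := hx.2
      _ ≤ τ (k+1) := tau_le hτ (k+1) le_rfl (i+1) (by omega)
      _ = 1 := hτ1

/-- The index of the piece containing `x`. -/
def pidx (k : ℕ) (τ : ℕ → ℝ) (x : ℝ) : ℕ := Nat.findGreatest (fun i => τ i ≤ x) k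

lemma pidx_le (x : ℝ) : pidx k τ x ≤ k := Nat.findGreatest_le k

lemma pidx_eval (hτ : ∀ i ≤ k, τ i < τ (i+1)) (P : ℕ → Polynomial ℝ)
    (hc : ∀ i, 1 ≤ i → i ≤ k → (P (i-1)).eval (τ i) = (P i).eval (τ i))
    {i : ℕ} {x : ℝ} (hi : i ≤ k) (hx : x ∈ Icc (τ i) (τ (i+1))) :
    (P (pidx k τ x)).eval x = (P i).eval x := by
  set m := pidx k τ x with hm
  have hmk : m ≤ k := Nat.findGreatest_le k
  have him : i ≤ m := Nat.le_findGreatest hi hx.1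
  have hτm : τ m ≤ x := Nat.findGreatest_spec (P := fun i => τ i ≤ x) hi hx.1
  rcases Nat.eq_or_lt_of_le him with h | h
  · rw [← h]
  · -- i < m, so m = i+1 and x = τ (i+1)
    have h1 : τ (i+1) ≤ τ m := tau_le hτ m (by omega) (i+1) h
    have hxe : x = τ (i+1) := le_antisymm hx.2 (le_trans h1 hτm)
    have hme : m = i+1 := by
      by_contra hne
      have : i+1 < m := by omega
      have := tau_lt hτ this (by omega)
      have := le_trans h1 hτm
      rw [hxe] at hτm
      have := tau_lt hτ (show i+1 < m by omega) (by omega)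
      linarith
    rw [hme, hxe]
    exact (hc (i+1) (by omega) (by omega)).symm

lemma pidx_mem (hτ0 : τ 0 = 0) (hτ1 : τ (k+1) = 1) (hτ : ∀ i ≤ k, τ i < τ (i+1))
    {x : ℝ} (hx : x ∈ Icc (0:ℝ) 1) :
    x ∈ Icc (τ (pidx k τ x)) (τ (pidx k τ x + 1)) := by
  set m := pidx k τ x with hm
  have hmk : m ≤ k := Nat.findGreatest_le k
  have h0 : τ 0 ≤ x := by rw [hτ0]; exact hx.1
  have hτm : τ m ≤ x := Nat.findGreatest_spec (P := fun i => τ i ≤ x) (Nat.zero_le k) h0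
  refine ⟨hτm, ?_⟩
  rcases Nat.eq_or_lt_of_le hmk with h | h
  · rw [h, hτ1]; exact hx.2
  · have := Nat.findGreatest_is_greatest (P := fun i => τ i ≤ x) (n := k)
      (Nat.lt_succ_self m) (by omega)
    exact le_of_not_ge this

lemma pidx_interior (hτ : ∀ i ≤ k, τ i < τ (i+1)) {i : ℕ} {x : ℝ} (hi : i ≤ k)
    (hx : x ∈ Ioo (τ i) (τ (i+1))) : pidx k τ x = i := by
  have him : i ≤ pidx k τ x := Nat.le_findGreatest hi hx.1.le
  have hmk : pidx k τ x ≤ k := Nat.findGreatest_le k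
  have hτm : τ (pidx k τ x) ≤ x := Nat.findGreatest_spec (P := fun i => τ i ≤ x) hi hx.1.le
  by_contra hne
  have h1 : τ (i+1) ≤ τ (pidx k τ x) := tau_le hτ _ (by omega) (i+1) (by omega)
  linarith [hx.2]

end Tau
lemma dmul_zero (C D : Polynomial ℝ) (t : ℝ) (n : ℕ)
    (h : ∀ j ≤ n, ((⇑derivative)^[j] D).eval t = 0) :
    ∀ j ≤ n, ((⇑derivative)^[j] (C * D)).eval t = 0 := by
  intro j hj
  rw [Polynomial.iterate_derivative_mul]
  rw [Polynomial.eval_finset_sum]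
  refine Finset.sum_eq_zero ?_
  intro m hm
  simp only [Finset.mem_range, Nat.lt_succ_iff] at hm
  rw [eval_smul, eval_mul, h m (le_trans hm hj), mul_zero, smul_zero]

lemma dmul_cancel (C D : Polynomial ℝ) (t : ℝ) (hC : C.eval t ≠ 0) (n : ℕ)
    (h : ∀ j ≤ n, ((⇑derivative)^[j] (C * D)).eval t = 0) :
    ∀ j ≤ n, ((⇑derivative)^[j] D).eval t = 0 := by
  intro j
  induction j using Nat.strong_induction_on with
  | _ j ih =>
    intro hj
    have key := h j hj
    rw [Polynomial.iterate_derivative_mul, Polynomial.eval_finset_sum] at key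
    rw [Finset.sum_eq_single j] at key
    · simp only [Nat.choose_self, one_smul, Nat.sub_self, Function.iterate_zero, id_eq,
        eval_mul] at key
      exact (mul_eq_zero.mp key).resolve_left hC
    · intro m hm hmj
      simp only [Finset.mem_range, Nat.lt_succ_iff] at hm
      have hmlt : m < j := lt_of_le_of_ne hm hmj
      simp only [eval_smul, eval_mul, smul_eq_mul]
      rw [ih m hmlt (by omega)]
      ring
    · intro hj'
      simp at hj'

lemma itd_add (n : ℕ) (p q : Polynomial ℝ) :
    (⇑derivative)^[n] (p + q) = (⇑derivative)^[n] p + (⇑derivative)^[n] q := by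
  induction n with
  | zero => rfl
  | succ m ih => rw [Function.iterate_succ_apply', ih, derivative_add,
      Function.iterate_succ_apply', Function.iterate_succ_apply']

/-- Restriction map from tuples of polynomials to functions on [0,1]. -/
def Phi (k : ℕ) (τ : ℕ → ℝ) (d : ℕ) :
    (Fin (k+1) → degreeLT ℝ (d+1)) →ₗ[ℝ] (Icc (0:ℝ) 1 → ℝ) where
  toFun P := fun x => ((P ⟨pidx k τ x.1, Nat.lt_succ_of_le (Nat.findGreatest_le k)⟩ : Polynomial ℝ)).eval x.1
  map_add' P Q := by funext x; simp
  map_smul' c P := by funext x; simp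

/-- Smoothness constraint map. -/
def Psi (k : ℕ) (τ : ℕ → ℝ) (d r : ℕ) :
    (Fin (k+1) → degreeLT ℝ (d+1)) →ₗ[ℝ] (Fin k → Fin (r+1) → ℝ) where
  toFun P := fun i j =>
    ((⇑derivative)^[j.1] (P i.castSucc : Polynomial ℝ)).eval (τ (i.1+1))
      - ((⇑derivative)^[j.1] (P i.succ : Polynomial ℝ)).eval (τ (i.1+1))
  map_add' P Q := by
    funext i j
    simp only [Pi.add_apply, Submodule.coe_add, itd_add, eval_add]
    ring
  map_smul' c P := by
    funext i j
    simp only [Pi.smul_apply, SetLike.val_smul, Polynomial.iterate_derivative_smul,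
      eval_smul, smul_eq_mul, RingHom.id_apply]
    ring
lemma natdeg_of_mem_degreeLT {d : ℕ} {p : Polynomial ℝ} (hp : p ∈ degreeLT ℝ (d+1)) :
    p.natDegree ≤ d := by
  rcases eq_or_ne p 0 with h | h
  · simp [h]
  · rw [mem_degreeLT, Polynomial.degree_eq_natDegree h] at hp
    exact Nat.lt_succ_iff.mp (by exact_mod_cast hp)

lemma mem_degreeLT_of_natdeg {d : ℕ} {p : Polynomial ℝ} (hp : p.natDegree ≤ d) :
    p ∈ degreeLT ℝ (d+1) := by
  rw [mem_degreeLT]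
  exact lt_of_le_of_lt (Polynomial.natDegree_le_iff_degree_le.mp hp)
    (by exact_mod_cast Nat.lt_succ_self d)

variable {k : ℕ} {τ : ℕ → ℝ}

lemma spline_sub1 (hτ0 : τ 0 = 0) (hτ1 : τ (k+1) = 1) (hτ : ∀ i ≤ k, τ i < τ (i+1))
    (d r : ℕ) (g : Icc (0:ℝ) 1 → ℝ)
    (h : g ∈ SplineSpace k τ d (fun _ => r)) :
    g ∈ (↑((LinearMap.ker (Psi k τ d r)).map (Phi k τ d)) : Set _) := by
  obtain ⟨f, ⟨P, h1, h2, h3⟩, hg⟩ := h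
  refine ⟨fun i => ⟨P i.1, mem_degreeLT_of_natdeg (h1 i.1 (Nat.lt_succ_iff.mp i.2))⟩, ?_, ?_⟩
  · rw [SetLike.mem_coe, LinearMap.mem_ker]
    funext i j
    show ((⇑derivative)^[j.1] (P i.castSucc.1)).eval (τ (i.1+1))
        - ((⇑derivative)^[j.1] (P i.succ.1)).eval (τ (i.1+1)) = 0
    rw [sub_eq_zero]
    have := h3 (i.1+1) (by omega) (by omega) j.1 (Nat.lt_succ_iff.mp j.2)
    simpa using this
  · funext x
    have hx := x.2
    have hm := pidx_mem hτ0 hτ1 hτ hx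
    show (P (pidx k τ x.1)).eval x.1 = g x
    rw [hg x, h2 (pidx k τ x.1) (pidx_le x.1) x.1 hm]
lemma spline_sub2 (hτ0 : τ 0 = 0) (hτ1 : τ (k+1) = 1) (hτ : ∀ i ≤ k, τ i < τ (i+1))
    (d r : ℕ) (g : Icc (0:ℝ) 1 → ℝ)
    (h : g ∈ (↑((LinearMap.ker (Psi k τ d r)).map (Phi k τ d)) : Set _)) :
    g ∈ SplineSpace k τ d (fun _ => r) := by
  obtain ⟨P, hker, rfl⟩ := h
  simp only [SetLike.mem_coe] at hker
  classical
  set Pn : ℕ → Polynomial ℝ := fun n => if h : n < k+1 then (P ⟨n, h⟩ : Polynomial ℝ) else 0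
    with hPn
  have hker' : ∀ i, 1 ≤ i → i ≤ k → ∀ j ≤ r,
      ((⇑derivative)^[j] (Pn (i-1))).eval (τ i) = ((⇑derivative)^[j] (Pn i)).eval (τ i) := by
    intro i hi1 hik j hj
    have h0 := congrFun (congrFun (LinearMap.mem_ker.mp hker) ⟨i-1, by omega⟩) ⟨j, by omega⟩
    have heq : ((⇑derivative)^[j] ((P (Fin.castSucc ⟨i-1, by omega⟩) : Polynomial ℝ))).eval (τ ((i-1)+1))
        - ((⇑derivative)^[j] ((P (Fin.succ ⟨i-1, by omega⟩) : Polynomial ℝ))).eval (τ ((i-1)+1)) = 0 := h0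
    rw [sub_eq_zero] at heq
    have e2 : (Fin.succ (⟨i-1, by omega⟩ : Fin k)) = (⟨i, by omega⟩ : Fin (k+1)) := by
      ext; simp; omega
    have e3 : (i-1)+1 = i := by omega
    rw [e2, e3] at heq
    have p1 : Pn (i-1) = (P ⟨i-1, by omega⟩ : Polynomial ℝ) := by
      rw [hPn]; simp only [dif_pos (show i-1 < k+1 by omega)]
    have p2 : Pn i = (P ⟨i, by omega⟩ : Polynomial ℝ) := by
      rw [hPn]; simp only [dif_pos (show i < k+1 by omega)]
    rw [p1, p2]
    exact heq
  refine ⟨fun y => (P ⟨pidx k τ y, Nat.lt_succ_of_le (Nat.findGreatest_le k)⟩ : Polynomial ℝ).eval y,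
    ⟨Pn, ?_, ?_, ?_⟩, fun x => rfl⟩
  · intro i hi
    rw [hPn]
    simp only [dif_pos (show i < k+1 by omega)]
    exact natdeg_of_mem_degreeLT (P ⟨i, by omega⟩).2
  · intro i hi x hx
    have key := pidx_eval hτ Pn (fun i h1 h2 => hker' i h1 h2 0 (Nat.zero_le r)) hi hx
    rw [← key, hPn]
    beta_reduce
    rw [dif_pos (show pidx k τ x < k + 1 from Nat.lt_succ_of_le (Nat.findGreatest_le k))]
  · intro i hi1 hik j hj
    exact hker' i hi1 hik j hj

lemma splineSpace_eq (hτ0 : τ 0 = 0) (hτ1 : τ (k+1) = 1) (hτ : ∀ i ≤ k, τ i < τ (i+1))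
    (d r : ℕ) :
    SplineSpace k τ d (fun _ => r) =
      ↑((LinearMap.ker (Psi k τ d r)).map (Phi k τ d)) :=
  Set.Subset.antisymm (fun g hg => spline_sub1 hτ0 hτ1 hτ d r g hg)
    (fun g hg => spline_sub2 hτ0 hτ1 hτ d r g hg)

lemma phi_injective (hτ0 : τ 0 = 0) (hτ1 : τ (k+1) = 1) (hτ : ∀ i ≤ k, τ i < τ (i+1))
    (d : ℕ) : Function.Injective (Phi k τ d) := by
  rw [← LinearMap.ker_eq_bot, LinearMap.ker_eq_bot']
  intro P hP
  funext i
  ext1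
  show (P i : Polynomial ℝ) = (0 : Polynomial ℝ)
  refine Polynomial.eq_of_infinite_eval_eq _ _ ?_
  have hik : i.1 ≤ k := Nat.lt_succ_iff.mp i.2
  have hinf : (Ioo (τ i.1) (τ (i.1+1))).Infinite :=
    Set.infinite_coe_iff.mp (Set.Ioo.infinite (hτ i.1 hik))
  refine hinf.mono ?_
  intro x hx
  have hx01 : x ∈ Icc (0:ℝ) 1 := piece_subset hτ0 hτ1 hτ hik (Ioo_subset_Icc_self hx)
  have hpi : pidx k τ x = i.1 := pidx_interior hτ hik hx
  have h0 := congrFun hP ⟨x, hx01⟩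
  have h1 : ((P ⟨pidx k τ x, Nat.lt_succ_of_le (Nat.findGreatest_le k)⟩ : Polynomial ℝ)).eval x = 0 := h0
  show eval x (P i : Polynomial ℝ) = eval x (0 : Polynomial ℝ)
  rw [eval_zero]
  rwa [show (⟨pidx k τ x, Nat.lt_succ_of_le (Nat.findGreatest_le k)⟩ : Fin (k+1)) = i by
    ext; exact hpi] at h1

lemma itd_sum {ι : Type} (s : Finset ι) (f : ι → Polynomial ℝ) (n : ℕ) :
    (⇑derivative)^[n] (∑ i ∈ s, f i) = ∑ i ∈ s, (⇑derivative)^[n] (f i) := by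
  classical
  induction s using Finset.induction_on with
  | empty => simp [Polynomial.iterate_derivative_zero]
  | insert _ _ hni ih => rw [Finset.sum_insert hni, Finset.sum_insert hni, itd_add, ih]

lemma psi_surjective (d r : ℕ) (hr : r ≤ d) : Function.Surjective (Psi k τ d r) := by
  intro c
  classical
  set q : ℕ → Polynomial ℝ := fun i =>
    if h : i < k then
      ∑ j : Fin (r+1), Polynomial.C (c ⟨i, h⟩ j / (j.1).factorial) * (X - Polynomial.C (τ (i+1)))^(j.1 : ℕ)
    else 0 with hq
  have hqmem : ∀ i, q i ∈ degreeLT ℝ (d+1) := by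
    intro i
    rw [hq]
    by_cases h : i < k
    · simp only [dif_pos h]
      refine Submodule.sum_mem _ ?_
      intro j _
      refine mem_degreeLT_of_natdeg ?_
      calc (Polynomial.C (c ⟨i, h⟩ j / (j.1).factorial) * (X - Polynomial.C (τ (i+1)))^(j.1:ℕ)).natDegree
          ≤ (Polynomial.C (c ⟨i, h⟩ j / (j.1).factorial)).natDegree
            + ((X - Polynomial.C (τ (i+1)))^(j.1:ℕ)).natDegree := natDegree_mul_le
        _ ≤ 0 + j.1 * 1 := by
            refine add_le_add (le_of_eq (natDegree_C _)) ?_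
            calc ((X - Polynomial.C (τ (i+1)))^(j.1:ℕ)).natDegree ≤ j.1 * (X - Polynomial.C (τ (i+1))).natDegree :=
                natDegree_pow_le
              _ = j.1 * 1 := by rw [natDegree_X_sub_C]
        _ ≤ d := by have := j.2; omega
    · simp only [dif_neg h]
      exact Submodule.zero_mem _
  refine ⟨fun n => ⟨-(∑ i ∈ Finset.range n.1, q i), ?_⟩, ?_⟩
  · exact Submodule.neg_mem _ (Submodule.sum_mem _ (fun i _ => hqmem i))
  · funext i j
    show ((⇑derivative)^[j.1] (-(∑ t ∈ Finset.range i.castSucc.1, q t))).eval (τ (i.1+1))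
      - ((⇑derivative)^[j.1] (-(∑ t ∈ Finset.range i.succ.1, q t))).eval (τ (i.1+1)) = c i j
    have hsub : (-(∑ t ∈ Finset.range i.castSucc.1, q t)) - (-(∑ t ∈ Finset.range i.succ.1, q t))
        = q i.1 := by
      have h1 : i.succ.1 = i.castSucc.1 + 1 := rfl
      rw [h1, Finset.sum_range_succ, Fin.coe_castSucc]
      ring
    rw [← eval_sub, ← Polynomial.iterate_derivative_sub, hsub]
    -- now evaluate derivative of q i.1
    rw [hq]
    simp only [dif_pos i.2]
    rw [itd_sum, eval_finset_sum]
    rw [Finset.sum_eq_single j]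
    · rw [Polynomial.iterate_derivative_C_mul, Polynomial.iterate_derivative_X_sub_pow,
        Nat.sub_self, pow_zero, Nat.descFactorial_self, nsmul_eq_mul, mul_one]
      rw [eval_mul, eval_C, eval_natCast]
      have hfac : (((j:ℕ)).factorial : ℝ) ≠ 0 := Nat.cast_ne_zero.mpr (Nat.factorial_ne_zero _)
      field_simp
    · intro b _ hbj
      rw [Polynomial.iterate_derivative_C_mul, Polynomial.iterate_derivative_X_sub_pow,
        nsmul_eq_mul, eval_mul, eval_C, eval_mul, eval_natCast, eval_pow, eval_sub, eval_X,
        eval_C, sub_self]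
      rcases lt_or_gt_of_ne (fun hh : b.1 = j.1 => hbj (Fin.ext hh)) with hlt | hgt
      · rw [Nat.descFactorial_eq_zero_iff_lt.mpr hlt]
        simp
      · rw [zero_pow (by omega)]
        ring
    · intro hj; exact absurd (Finset.mem_univ j) hj

instance degLT_findim (n : ℕ) : FiniteDimensional ℝ (degreeLT ℝ n) :=
  Module.Finite.equiv (Polynomial.degreeLTEquiv ℝ n).symm

lemma finrank_degLT (n : ℕ) : Module.finrank ℝ (degreeLT ℝ n) = n := by
  rw [LinearEquiv.finrank_eq (Polynomial.degreeLTEquiv ℝ n),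
    Module.finrank_fintype_fun_eq_card, Fintype.card_fin]

lemma finrank_ker_psi (d r : ℕ) (hr : r ≤ d) :
    Module.finrank ℝ (LinearMap.ker (Psi k τ d r)) = k * (d - r) + (d + 1) := by
  have hsurj : Function.Surjective (Psi k τ d r) := psi_surjective d r hr
  have hrank := LinearMap.finrank_range_add_finrank_ker (Psi k τ d r)
  have hrange : LinearMap.range (Psi k τ d r) = ⊤ := LinearMap.range_eq_top.mpr hsurj
  rw [hrange, finrank_top] at hrank
  have hcod : Module.finrank ℝ (Fin k → Fin (r+1) → ℝ) = k * (r+1) := by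
    rw [Module.finrank_pi_fintype ℝ]
    simp [Module.finrank_fintype_fun_eq_card]
  have hdom : Module.finrank ℝ (Fin (k+1) → degreeLT ℝ (d+1)) = (k+1) * (d+1) := by
    rw [Module.finrank_pi_fintype ℝ]
    simp [finrank_degLT]
  rw [hcod, hdom] at hrank
  have key : (k+1) * (d+1) = k * (r+1) + (k * (d - r) + (d + 1)) := by
    have hd : d = (d - r) + r := by omega
    set m := d - r with hm
    rw [hd]
    ring
  omega

lemma finrank_splineSpace (hτ0 : τ 0 = 0) (hτ1 : τ (k+1) = 1) (hτ : ∀ i ≤ k, τ i < τ (i+1))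
    (d r : ℕ) (hr : r ≤ d) :
    Module.finrank ℝ (Submodule.span ℝ (SplineSpace k τ d (fun _ => r))) =
      k * (d - r) + (d + 1) := by
  have he : SplineSpace k τ d (fun _ => r) = ↑((LinearMap.ker (Psi k τ d r)).map (Phi k τ d)) :=
    splineSpace_eq hτ0 hτ1 hτ d r
  have hsub : Submodule.span ℝ (SplineSpace k τ d (fun _ => r)) =
      (LinearMap.ker (Psi k τ d r)).map (Phi k τ d) := by
    rw [he]; exact Submodule.span_eq _
  exact (LinearEquiv.finrank_eq (LinearEquiv.ofEq _ _ hsub)).trans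
    ((LinearEquiv.finrank_eq ((Submodule.equivMapOfInjective (Phi k τ d)
      (phi_injective hτ0 hτ1 hτ d) (LinearMap.ker (Psi k τ d r))))).symm.trans
      (finrank_ker_psi d r hr))

lemma tau_mem01 (hτ0 : τ 0 = 0) (hτ1 : τ (k+1) = 1) (hτ : ∀ i ≤ k, τ i < τ (i+1))
    {i : ℕ} (hi : i ≤ k+1) : τ i ∈ Icc (0:ℝ) 1 := by
  constructor
  · rw [← hτ0]; exact tau_le hτ i hi 0 (Nat.zero_le i)
  · rw [← hτ1]; exact tau_le hτ (k+1) le_rfl i hi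

lemma spline_mul (hτ : ∀ i ≤ k, τ i < τ (i+1)) (α : Polynomial ℝ) (d e r : ℕ)
    (hde : α.natDegree * 2 + d ≤ e) (g : Icc (0:ℝ) 1 → ℝ)
    (hg : g ∈ SplineSpace k τ d (fun _ => r)) :
    (fun x : Icc (0:ℝ) 1 => (α.eval x.1) ^ 2 * g x) ∈ SplineSpace k τ e (fun _ => r) := by
  obtain ⟨f, ⟨Q, h1, h2, h3⟩, hgf⟩ := hg
  refine ⟨fun y => (α.eval y) ^ 2 * f y, ⟨fun i => α ^ 2 * Q i, ?_, ?_, ?_⟩, ?_⟩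
  · intro i hi
    calc (α ^ 2 * Q i).natDegree ≤ (α ^ 2).natDegree + (Q i).natDegree := natDegree_mul_le
      _ ≤ 2 * α.natDegree + d := by
          rw [natDegree_pow]
          exact add_le_add le_rfl (h1 i hi)
      _ ≤ e := by omega
  · intro i hi x hx
    show (α.eval x) ^ 2 * f x = eval x (α ^ 2 * Q i)
    rw [h2 i hi x hx, eval_mul, eval_pow]
  · intro i hi1 hik j hj
    have hD : ∀ j' ≤ r, ((⇑derivative)^[j'] (Q (i-1) - Q i)).eval (τ i) = 0 := by
      intro j' hj'
      rw [Polynomial.iterate_derivative_sub, eval_sub, sub_eq_zero]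
      exact h3 i hi1 hik j' hj'
    have := dmul_zero (α ^ 2) (Q (i-1) - Q i) (τ i) r hD j hj
    rw [mul_sub, Polynomial.iterate_derivative_sub, eval_sub, sub_eq_zero] at this
    exact this
  · intro x
    show (α.eval x.1) ^ 2 * g x = (α.eval x.1) ^ 2 * f x.1
    rw [hgf x]

lemma gamma_sub (p r : ℕ)
    (hτ0 : τ 0 = 0) (hτ1 : τ (k+1) = 1) (hτ : ∀ i ≤ k, τ i < τ (i+1))
    (αtL αtR : Polynomial ℝ) (hcop : IsCoprime αtL αtR)
    (hneL : ∀ v ∈ Set.Icc (0:ℝ) 1, αtL.eval v ≠ 0)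
    (hneR : ∀ v ∈ Set.Icc (0:ℝ) 1, αtR.eval v ≠ 0)
    (g : Icc (0:ℝ) 1 → ℝ)
    (hL : (fun x : Icc (0:ℝ) 1 => (αtL.eval x.1) ^ 2 * g x) ∈ SplineSpace k τ p (fun _ => r))
    (hR : (fun x : Icc (0:ℝ) 1 => (αtR.eval x.1) ^ 2 * g x) ∈ SplineSpace k τ p (fun _ => r)) :
    g ∈ SplineSpace k τ (p - 2 * max αtL.natDegree αtR.natDegree) (fun _ => r) := by
  classical
  obtain ⟨fL, ⟨A, hA1, hA2, hA3⟩, hgL⟩ := hL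
  obtain ⟨fR, ⟨B, hB1, hB2, hB3⟩, hgR⟩ := hR
  have hαL0 : αtL ≠ 0 := fun h => hneL 0 (by norm_num) (by simp [h])
  have hαR0 : αtR ≠ 0 := fun h => hneR 0 (by norm_num) (by simp [h])
  have key : ∀ i, i ≤ k → ∃ Q : Polynomial ℝ, A i = αtL ^ 2 * Q ∧ B i = αtR ^ 2 * Q := by
    intro i hi
    have hAB : αtR ^ 2 * A i = αtL ^ 2 * B i := by
      apply Polynomial.eq_of_infinite_eval_eq
      refine Set.Infinite.mono ?_ (Set.infinite_coe_iff.mp (Set.Icc.infinite (hτ i hi)))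
      intro x hx
      have hx01 : x ∈ Icc (0:ℝ) 1 := piece_subset hτ0 hτ1 hτ hi hx
      have e1 : (A i).eval x = (αtL.eval x) ^ 2 * g ⟨x, hx01⟩ := by
        rw [← hA2 i hi x hx]; exact (hgL ⟨x, hx01⟩).symm
      have e2 : (B i).eval x = (αtR.eval x) ^ 2 * g ⟨x, hx01⟩ := by
        rw [← hB2 i hi x hx]; exact (hgR ⟨x, hx01⟩).symm
      show eval x (αtR ^ 2 * A i) = eval x (αtL ^ 2 * B i)
      rw [eval_mul, eval_mul, eval_pow, eval_pow, e1, e2]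
      ring
    have hdvd : αtL ^ 2 ∣ A i :=
      (hcop.pow).dvd_of_dvd_mul_left ⟨B i, hAB⟩
    obtain ⟨Q, hQ⟩ := hdvd
    refine ⟨Q, hQ, ?_⟩
    have hc : αtL ^ 2 * (αtR ^ 2 * Q) = αtL ^ 2 * B i := by
      rw [← hAB, hQ]; ring
    exact (mul_left_cancel₀ (pow_ne_zero 2 hαL0) hc).symm
  set Qf : ℕ → Polynomial ℝ := fun i => if h : i ≤ k then (key i h).choose else 0 with hQf
  have hQA : ∀ i, i ≤ k → A i = αtL ^ 2 * Qf i := by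
    intro i hi
    rw [hQf]; simp only [dif_pos hi]
    exact (key i hi).choose_spec.1
  have hQB : ∀ i, i ≤ k → B i = αtR ^ 2 * Qf i := by
    intro i hi
    rw [hQf]; simp only [dif_pos hi]
    exact (key i hi).choose_spec.2
  -- smoothness of Qf at the knots
  have hsmooth : ∀ i, 1 ≤ i → i ≤ k → ∀ j ≤ r,
      ((⇑derivative)^[j] (Qf (i-1))).eval (τ i) = ((⇑derivative)^[j] (Qf i)).eval (τ i) := by
    intro i hi1 hik j hj
    have hαLτ : αtL.eval (τ i) ≠ 0 := hneL (τ i) (tau_mem01 hτ0 hτ1 hτ (by omega))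
    have hC : (αtL ^ 2).eval (τ i) ≠ 0 := by
      rw [eval_pow]; exact pow_ne_zero 2 hαLτ
    have hD := dmul_cancel (αtL ^ 2) (Qf (i-1) - Qf i) (τ i) hC r ?_ j hj
    · rw [Polynomial.iterate_derivative_sub, eval_sub, sub_eq_zero] at hD
      exact hD
    · intro j' hj'
      rw [mul_sub, ← hQA (i-1) (by omega), ← hQA i hik,
        Polynomial.iterate_derivative_sub, eval_sub, sub_eq_zero]
      exact hA3 i hi1 hik j' hj'
  refine ⟨fun y => (Qf (pidx k τ y)).eval y, ⟨Qf, ?_, ?_, ?_⟩, ?_⟩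
  · -- degrees
    intro i hi
    by_cases hz : Qf i = 0
    · rw [hz]; simp
    · have hdL : αtL.natDegree * 2 + (Qf i).natDegree ≤ p := by
        have := hA1 i hi
        rw [hQA i hi, natDegree_mul (pow_ne_zero 2 hαL0) hz, natDegree_pow] at this
        omega
      have hdR : αtR.natDegree * 2 + (Qf i).natDegree ≤ p := by
        have := hB1 i hi
        rw [hQB i hi, natDegree_mul (pow_ne_zero 2 hαR0) hz, natDegree_pow] at this
        omega
      rcases max_choice αtL.natDegree αtR.natDegree with hm | hm <;> rw [hm] <;> omega
  · -- pieces
    intro i hi x hx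
    exact pidx_eval hτ Qf (fun i h1 h2 => hsmooth i h1 h2 0 (Nat.zero_le r)) hi hx
  · exact hsmooth
  · -- g agrees with glued function
    intro x
    have hm := pidx_mem hτ0 hτ1 hτ x.2
    have hαLx : αtL.eval x.1 ≠ 0 := hneL x.1 x.2
    have e1 : fL x.1 = (A (pidx k τ x.1)).eval x.1 := hA2 _ (pidx_le x.1) x.1 hm
    have e2 : (αtL.eval x.1) ^ 2 * g x = fL x.1 := hgL x
    have e3 : (A (pidx k τ x.1)).eval x.1
        = (αtL.eval x.1) ^ 2 * (Qf (pidx k τ x.1)).eval x.1 := by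
      rw [hQA _ (pidx_le x.1), eval_mul, eval_pow]
    apply mul_left_cancel₀ (pow_ne_zero 2 hαLx)
    rw [e2, e1, e3]

/-- the space Γ₂ and its dimension. -/
theorem stmt5 (p r k : ℕ) (hp : 5 ≤ p) (hr2 : 2 ≤ r) (hrp : r + 3 ≤ p)
    (τ : ℕ → ℝ) (hτ0 : τ 0 = 0) (hτ1 : τ (k+1) = 1)
    (hτ : ∀ i ≤ k, τ i < τ (i+1))
    (αtL αtR : Polynomial ℝ) (hcop : IsCoprime αtL αtR)
    (hdL : αtL.natDegree ≤ 1) (hdR : αtR.natDegree ≤ 1)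
    (hneL : ∀ v ∈ Set.Icc (0:ℝ) 1, αtL.eval v ≠ 0)
    (hneR : ∀ v ∈ Set.Icc (0:ℝ) 1, αtR.eval v ≠ 0) :
    {g : Set.Icc (0:ℝ) 1 → ℝ |
        (fun x : Set.Icc (0:ℝ) 1 => (αtL.eval x.1) ^ 2 * g x) ∈
          SplineSpace k τ p (fun _ => r) ∧
        (fun x : Set.Icc (0:ℝ) 1 => (αtR.eval x.1) ^ 2 * g x) ∈
          SplineSpace k τ p (fun _ => r)} =
      SplineSpace k τ (p - 2 * max αtL.natDegree αtR.natDegree) (fun _ => r) ∧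
    Module.finrank ℝ (Submodule.span ℝ
      {g : Set.Icc (0:ℝ) 1 → ℝ |
        (fun x : Set.Icc (0:ℝ) 1 => (αtL.eval x.1) ^ 2 * g x) ∈
          SplineSpace k τ p (fun _ => r) ∧
        (fun x : Set.Icc (0:ℝ) 1 => (αtR.eval x.1) ^ 2 * g x) ∈
          SplineSpace k τ p (fun _ => r)}) =
      k * (p - 2 * max αtL.natDegree αtR.natDegree - r) +
        (p + 1 - 2 * max αtL.natDegree αtR.natDegree) := by
  have hmL := le_max_left αtL.natDegree αtR.natDegree
  have hmR := le_max_right αtL.natDegree αtR.natDegree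
  have hm1 : max αtL.natDegree αtR.natDegree ≤ 1 := max_le hdL hdR
  have hset : {g : Set.Icc (0:ℝ) 1 → ℝ |
        (fun x : Set.Icc (0:ℝ) 1 => (αtL.eval x.1) ^ 2 * g x) ∈
          SplineSpace k τ p (fun _ => r) ∧
        (fun x : Set.Icc (0:ℝ) 1 => (αtR.eval x.1) ^ 2 * g x) ∈
          SplineSpace k τ p (fun _ => r)} =
      SplineSpace k τ (p - 2 * max αtL.natDegree αtR.natDegree) (fun _ => r) := by
    apply Set.Subset.antisymm
    · intro g hg
      exact gamma_sub p r hτ0 hτ1 hτ αtL αtR hcop hneL hneR g hg.1 hg.2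
    · intro g hg
      constructor
      · exact spline_mul hτ αtL (p - 2 * max αtL.natDegree αtR.natDegree) p r (by omega) g hg
      · exact spline_mul hτ αtR (p - 2 * max αtL.natDegree αtR.natDegree) p r (by omega) g hg
  refine ⟨hset, ?_⟩
  have key := finrank_splineSpace hτ0 hτ1 hτ (p - 2 * max αtL.natDegree αtR.natDegree) r
    (by omega)
  rw [show p + 1 - 2 * max αtL.natDegree αtR.natDegree
    = (p - 2 * max αtL.natDegree αtR.natDegree) + 1 from by omega]
  exact (LinearEquiv.finrank_eq (LinearEquiv.ofEq _ _ (by rw [hset]))).trans key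
end
end

section
/- Let p ≥ 5 and 2 ≤ r ≤ p−3 be integers, k ∈ ℕ₀, and 0 = τ₀ < τ₁ < ⋯ < τ_k < τ_{k+1} = 1. Let α̃^(L), α̃^(R) be coprime real polynomial functions of degree at most 1, each nonvanishing on [0,1], and let d_α̃ = max(deg α̃^(L), deg α̃^(R)). Then { g : [0,1] → ℝ | α̃^(L)·g ∈ S(p,r) and α̃^(R)·g ∈ S(p,r) } = S(p − d_α̃, r). -/
open Set Polynomial

noncomputable section

private lemma funEq : (fun Q : Polynomial ℝ => Polynomial.derivative Q) = ⇑(derivative (R := ℝ)) := rfl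

/-- Leibniz: vanishing of iterated derivatives of `Q` at `x` propagates to `β * Q`. -/
private lemma iterDeriv_mul_eval_zero (β Q : Polynomial ℝ) (x : ℝ) (s : ℕ)
    (h : ∀ j ≤ s, ((⇑derivative)^[j] Q).eval x = 0) :
    ∀ j ≤ s, ((⇑derivative)^[j] (β * Q)).eval x = 0 := by
  intro j hj
  rw [Polynomial.iterate_derivative_mul, Polynomial.eval_finset_sum]
  apply Finset.sum_eq_zero
  intro m hm
  have hm' : m ≤ j := Nat.lt_succ_iff.mp (Finset.mem_range.mp hm)
  rw [Polynomial.eval_smul, Polynomial.eval_mul, h m (hm'.trans hj), mul_zero, smul_zero]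

/-- Conversely, if `β x ≠ 0`, vanishing of iterated derivatives of `β * Q` at `x`
propagates to `Q`. -/
private lemma iterDeriv_cancel (β Q : Polynomial ℝ) (x : ℝ) (hβ : β.eval x ≠ 0) (s : ℕ)
    (h : ∀ j ≤ s, ((⇑derivative)^[j] (β * Q)).eval x = 0) :
    ∀ j ≤ s, ((⇑derivative)^[j] Q).eval x = 0 := by
  intro j
  induction j using Nat.strong_induction_on with
  | _ j ih =>
    intro hj
    have h0 := h j hj
    rw [Polynomial.iterate_derivative_mul, Polynomial.eval_finset_sum,
      Finset.sum_range_succ] at h0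
    have hz : ∀ m ∈ Finset.range j,
        ((j.choose m • ((⇑derivative)^[j-m] β * (⇑derivative)^[m] Q)).eval x) = 0 := by
      intro m hm
      have hmj : m < j := Finset.mem_range.mp hm
      rw [Polynomial.eval_smul, Polynomial.eval_mul, ih m hmj (hmj.le.trans hj),
        mul_zero, smul_zero]
    rw [Finset.sum_eq_zero hz, zero_add, Polynomial.eval_smul, Nat.choose_self,
      Nat.sub_self, one_smul, Function.iterate_zero_apply, Polynomial.eval_mul] at h0
    exact (mul_eq_zero.mp h0).resolve_left hβ

private lemma iterDeriv_mul_eq (β A B : Polynomial ℝ) (x : ℝ) (s : ℕ)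
    (h : ∀ j ≤ s, ((⇑derivative)^[j] A).eval x = ((⇑derivative)^[j] B).eval x) :
    ∀ j ≤ s, ((⇑derivative)^[j] (β * A)).eval x = ((⇑derivative)^[j] (β * B)).eval x := by
  intro j hj
  have h0 : ∀ j ≤ s, ((⇑derivative)^[j] (A - B)).eval x = 0 := by
    intro j hj
    rw [Polynomial.iterate_derivative_sub, Polynomial.eval_sub, h j hj, sub_self]
  have := iterDeriv_mul_eval_zero β (A - B) x s h0 j hj
  rw [mul_sub, Polynomial.iterate_derivative_sub, Polynomial.eval_sub] at this
  linarith

private lemma iterDeriv_cancel_eq (β A B : Polynomial ℝ) (x : ℝ) (hβ : β.eval x ≠ 0)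
    (s : ℕ)
    (h : ∀ j ≤ s, ((⇑derivative)^[j] (β * A)).eval x = ((⇑derivative)^[j] (β * B)).eval x) :
    ∀ j ≤ s, ((⇑derivative)^[j] A).eval x = ((⇑derivative)^[j] B).eval x := by
  intro j hj
  have h0 : ∀ j ≤ s, ((⇑derivative)^[j] (β * (A - B))).eval x = 0 := by
    intro j hj
    rw [mul_sub, Polynomial.iterate_derivative_sub, Polynomial.eval_sub, h j hj, sub_self]
  have := iterDeriv_cancel β (A - B) x hβ s h0 j hj
  rw [Polynomial.iterate_derivative_sub, Polynomial.eval_sub] at this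
  linarith

private lemma tau_mono (k : ℕ) (τ : ℕ → ℝ) (hτ : ∀ i ≤ k, τ i < τ (i+1)) :
    ∀ i j, i ≤ j → j ≤ k+1 → τ i ≤ τ j := by
  intro i j hij hj
  induction j with
  | zero =>
    have : i = 0 := Nat.le_zero.mp hij
    simp [this]
  | succ n ih =>
    rcases Nat.eq_or_lt_of_le hij with h | h
    · rw [h]
    · have h1 : τ i ≤ τ n := ih (by omega) (by omega)
      have h2 : τ n < τ (n+1) := hτ n (by omega)
      linarith

/-- The key "division" direction: if `β • g` is a spline of degree `p` whose pieces are
all divisible by `β`, and `β` does not vanish on `[0,1]`, then `g` is a spline of degree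
`p - deg β`. -/
private lemma hard_aux (p r k : ℕ) (τ : ℕ → ℝ) (hτ0 : τ 0 = 0) (hτ1 : τ (k+1) = 1)
    (hτ : ∀ i ≤ k, τ i < τ (i+1)) (β : Polynomial ℝ)
    (hne : ∀ v ∈ Set.Icc (0:ℝ) 1, β.eval v ≠ 0)
    (g : Set.Icc (0:ℝ) 1 → ℝ) (f : ℝ → ℝ) (P : ℕ → Polynomial ℝ)
    (hdeg : ∀ i ≤ k, (P i).natDegree ≤ p)
    (hval : ∀ i ≤ k, ∀ x ∈ Set.Icc (τ i) (τ (i+1)), f x = (P i).eval x)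
    (hsm : ∀ i, 1 ≤ i → i ≤ k → ∀ j ≤ r,
      ((⇑derivative)^[j] (P (i-1))).eval (τ i) = ((⇑derivative)^[j] (P i)).eval (τ i))
    (hg : ∀ x : Set.Icc (0:ℝ) 1, β.eval x.1 * g x = f x.1)
    (hdvd : ∀ i ≤ k, β ∣ P i) :
    g ∈ SplineSpace k τ (p - β.natDegree) (fun _ => r) := by
  classical
  have hmono := tau_mono k τ hτ
  have hsub : ∀ i ≤ k, Set.Icc (τ i) (τ (i+1)) ⊆ Set.Icc (0:ℝ) 1 := by
    intro i hi x hx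
    constructor
    · calc (0:ℝ) = τ 0 := hτ0.symm
        _ ≤ τ i := hmono 0 i (Nat.zero_le _) (by omega)
        _ ≤ x := hx.1
    · calc x ≤ τ (i+1) := hx.2
        _ ≤ τ (k+1) := hmono (i+1) (k+1) (by omega) le_rfl
        _ = 1 := hτ1
  have hβ0 : β ≠ 0 := by
    intro h
    exact hne 0 ⟨le_refl _, zero_le_one⟩ (by simp [h])
  set Q : ℕ → Polynomial ℝ := fun i => if h : β ∣ P i then h.choose else 0 with hQdef
  have hQ : ∀ i ≤ k, P i = β * Q i := by
    intro i hi
    have h := hdvd i hi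
    simp only [hQdef, dif_pos h]
    exact h.choose_spec
  have hgQ : ∀ i, ∀ hi : i ≤ k, ∀ x, ∀ hx : x ∈ Set.Icc (τ i) (τ (i+1)),
      g ⟨x, hsub i hi hx⟩ = (Q i).eval x := by
    intro i hi x hx
    have h1 := hg ⟨x, hsub i hi hx⟩
    rw [hval i hi x hx, hQ i hi, Polynomial.eval_mul] at h1
    exact mul_left_cancel₀ (hne x (hsub i hi hx)) h1
  refine ⟨fun x => if hx : x ∈ Set.Icc (0:ℝ) 1 then g ⟨x, hx⟩ else 0, ⟨Q, ?_, ?_, ?_⟩, ?_⟩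
  · intro i hi
    by_cases hQ0 : Q i = 0
    · simp [hQ0]
    · have hd := hdeg i hi
      rw [hQ i hi, Polynomial.natDegree_mul hβ0 hQ0] at hd
      omega
  · intro i hi x hx
    dsimp only
    rw [dif_pos (hsub i hi hx)]
    exact hgQ i hi x hx
  · intro i hi1 hik j hj
    have hik' : i - 1 ≤ k := by omega
    have hτiI : τ i ∈ Set.Icc (0:ℝ) 1 := by
      constructor
      · rw [← hτ0]; exact hmono 0 i (Nat.zero_le _) (by omega)
      · rw [← hτ1]; exact hmono i (k+1) (by omega) le_rfl
    have h1 := hsm i hi1 hik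
    rw [hQ (i-1) hik', hQ i hik] at h1
    rw [funEq]
    exact iterDeriv_cancel_eq β (Q (i-1)) (Q i) (τ i) (hne _ hτiI) r h1 j hj
  · intro x
    dsimp only
    rw [dif_pos x.2]

/-- The multiplication direction: multiplying a spline of degree `p - d` by a polynomial
of degree at most `d ≤ p` gives a spline of degree `p`. -/
private lemma easy_aux (p r k d : ℕ) (τ : ℕ → ℝ) (β : Polynomial ℝ)
    (hβd : β.natDegree ≤ d) (hdp : d ≤ p)
    (g : Set.Icc (0:ℝ) 1 → ℝ)
    (hgS : g ∈ SplineSpace k τ (p - d) (fun _ => r)) :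
    (fun x : Set.Icc (0:ℝ) 1 => β.eval x.1 * g x) ∈ SplineSpace k τ p (fun _ => r) := by
  obtain ⟨f, ⟨P, hdeg, hval, hsm⟩, hg⟩ := hgS
  refine ⟨fun x => β.eval x * f x, ⟨fun i => β * P i, ?_, ?_, ?_⟩, ?_⟩
  · intro i hi
    calc (β * P i).natDegree ≤ β.natDegree + (P i).natDegree := Polynomial.natDegree_mul_le
      _ ≤ d + (p - d) := add_le_add hβd (hdeg i hi)
      _ = p := by omega
  · intro i hi x hx
    dsimp only
    rw [hval i hi x hx, Polynomial.eval_mul]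
  · intro i hi1 hik j hj
    rw [funEq]
    exact iterDeriv_mul_eq β (P (i-1)) (P i) (τ i) r
      (fun j hj => by have := hsm i hi1 hik j hj; rw [funEq] at this; exact this) j hj
  · intro x
    dsimp only
    rw [hg x]

/-- the division property of spline spaces. -/
theorem stmt13 (p r k : ℕ) (hp : 5 ≤ p) (hr2 : 2 ≤ r) (hrp : r + 3 ≤ p)
    (τ : ℕ → ℝ) (hτ0 : τ 0 = 0) (hτ1 : τ (k+1) = 1)
    (hτ : ∀ i ≤ k, τ i < τ (i+1))
    (αtL αtR : Polynomial ℝ) (hcop : IsCoprime αtL αtR)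
    (hdL : αtL.natDegree ≤ 1) (hdR : αtR.natDegree ≤ 1)
    (hneL : ∀ v ∈ Set.Icc (0:ℝ) 1, αtL.eval v ≠ 0)
    (hneR : ∀ v ∈ Set.Icc (0:ℝ) 1, αtR.eval v ≠ 0) :
    {g : Set.Icc (0:ℝ) 1 → ℝ |
        (fun x : Set.Icc (0:ℝ) 1 => αtL.eval x.1 * g x) ∈
          SplineSpace k τ p (fun _ => r) ∧
        (fun x : Set.Icc (0:ℝ) 1 => αtR.eval x.1 * g x) ∈
          SplineSpace k τ p (fun _ => r)} =
      SplineSpace k τ (p - max αtL.natDegree αtR.natDegree) (fun _ => r) := by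
  have hmono := tau_mono k τ hτ
  have hsub : ∀ i ≤ k, Set.Icc (τ i) (τ (i+1)) ⊆ Set.Icc (0:ℝ) 1 := by
    intro i hi x hx
    constructor
    · calc (0:ℝ) = τ 0 := hτ0.symm
        _ ≤ τ i := hmono 0 i (Nat.zero_le _) (by omega)
        _ ≤ x := hx.1
    · calc x ≤ τ (i+1) := hx.2
        _ ≤ τ (k+1) := hmono (i+1) (k+1) (by omega) le_rfl
        _ = 1 := hτ1
  ext g
  simp only [Set.mem_setOf_eq]
  constructor
  · rintro ⟨⟨fL, ⟨PL, hdL', hvL, hsL⟩, hgL⟩, ⟨fR, ⟨PR, hdR', hvR, hsR⟩, hgR⟩⟩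
    rw [funEq] at hsL hsR
    have key : ∀ i ≤ k, αtR * PL i = αtL * PR i := by
      intro i hi
      apply Polynomial.eq_of_infinite_eval_eq
      apply Set.Infinite.mono (s := Set.Icc (τ i) (τ (i+1)))
      · intro x hx
        have hxI := hsub i hi hx
        have h1 : αtL.eval x * g ⟨x, hxI⟩ = fL x := hgL ⟨x, hxI⟩
        have h2 : αtR.eval x * g ⟨x, hxI⟩ = fR x := hgR ⟨x, hxI⟩
        simp only [Set.mem_setOf_eq, Polynomial.eval_mul]
        rw [← hvL i hi x hx, ← hvR i hi x hx, ← h1, ← h2]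
        ring
      · exact Set.Icc_infinite (hτ i hi)
    rcases le_total αtR.natDegree αtL.natDegree with hle | hle
    · rw [max_eq_left hle]
      exact hard_aux p r k τ hτ0 hτ1 hτ αtL hneL g fL PL hdL' hvL hsL hgL
        (fun i hi => hcop.dvd_of_dvd_mul_left ⟨PR i, key i hi⟩)
    · rw [max_eq_right hle]
      exact hard_aux p r k τ hτ0 hτ1 hτ αtR hneR g fR PR hdR' hvR hsR hgR
        (fun i hi => hcop.symm.dvd_of_dvd_mul_left ⟨PL i, (key i hi).symm⟩)
  · intro hgS
    have hmax : max αtL.natDegree αtR.natDegree ≤ p := by omega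
    exact ⟨easy_aux p r k _ τ αtL (le_max_left _ _) hmax g hgS,
      easy_aux p r k _ τ αtR (le_max_right _ _) hmax g hgS⟩
end
end
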